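/- For a theory T containing HA: T is closed under Π_k-DML^⊥-R (from T ⊢ ¬(φ ∧ ψ) infer T ⊢ φ^⊥ ∨ ψ^⊥, for φ, ψ ∈ Π_k) if and only if T is closed under Σ_k-DNE-R (from T ⊢ ¬¬φ infer T ⊢ φ, for φ ∈ Σ_k). -/
import Mathlib


namespace SemiClassicalArith

/-- Terms of arithmetic: variables (de Bruijn indices) and function symbols
(one symbol of each arity for every code, covering all primitive recursive functions). -/
inductive Term : Type
  | var : ℕ → Term
  | func : (code : ℕ) → (arity : ℕ) → (Fin arity → Term) → Term

namespace Term

/-- Shift all variables `≥ d` up by one. -/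
def lift (d : ℕ) : Term → Term
  | var n => if n < d then var n else var (n + 1)
  | func c a ts => func c a fun i => (ts i).lift d

/-- Binder-removing substitution of `s` for variable `k`. -/
def subst (k : ℕ) (s : Term) : Term → Term
  | var n => if n < k then var n else if n = k then s else var (n - 1)
  | func c a ts => func c a fun i => Term.subst k s (ts i)

/-- In-place replacement of variable `k` by `s` (no shifting of other variables). -/
def repl (k : ℕ) (s : Term) : Term → Term
  | var n => if n = k then s else var n
  | func c a ts => func c a fun i => Term.repl k s (ts i)

/-- Free variables of a term. -/
def fv : Term → Finset ℕ
  | var n => {n}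
  | func _ _ ts => Finset.univ.sup fun i => (ts i).fv

/-- The constant zero (function symbol of arity 0, code 0). -/
def zero : Term := func 0 0 (fun i => i.elim0)

/-- Successor (function symbol of arity 1, code 1). -/
def succ (t : Term) : Term := func 1 1 (fun _ => t)

end Term

/-- Formulas of arithmetic in the language with an extra nullary predicate
symbol `$` (`dollar`), used as a place holder. Quantifiers use de Bruijn indices. -/
inductive Formula : Type
  | falsum : Formula
  | dollar : Formula
  | eq : Term → Term → Formula
  | and : Formula → Formula → Formula
  | or : Formula → Formula → Formula
  | imp : Formula → Formula → Formula
  | all : Formula → Formula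
  | ex : Formula → Formula

namespace Formula

def neg (φ : Formula) : Formula := φ.imp falsum

def iff (φ ψ : Formula) : Formula := (φ.imp ψ).and (ψ.imp φ)

/-- `¬_$ φ`, i.e. `φ → $`. -/
def negD (φ : Formula) : Formula := φ.imp dollar

def lift (d : ℕ) : Formula → Formula
  | falsum => falsum
  | dollar => dollar
  | eq t u => eq (t.lift d) (u.lift d)
  | and φ ψ => and (φ.lift d) (ψ.lift d)
  | or φ ψ => or (φ.lift d) (ψ.lift d)
  | imp φ ψ => imp (φ.lift d) (ψ.lift d)
  | all φ => all (φ.lift (d + 1))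
  | ex φ => ex (φ.lift (d + 1))

/-- Binder-removing substitution of term `s` for variable `k`. -/
def subst (k : ℕ) (s : Term) : Formula → Formula
  | falsum => falsum
  | dollar => dollar
  | eq t u => eq (Term.subst k s t) (Term.subst k s u)
  | and φ ψ => and (Formula.subst k s φ) (Formula.subst k s ψ)
  | or φ ψ => or (Formula.subst k s φ) (Formula.subst k s ψ)
  | imp φ ψ => imp (Formula.subst k s φ) (Formula.subst k s ψ)
  | all φ => all (Formula.subst (k + 1) (s.lift 0) φ)
  | ex φ => ex (Formula.subst (k + 1) (s.lift 0) φ)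

/-- In-place replacement of variable `k` by term `s`. -/
def repl (k : ℕ) (s : Term) : Formula → Formula
  | falsum => falsum
  | dollar => dollar
  | eq t u => eq (Term.repl k s t) (Term.repl k s u)
  | and φ ψ => and (Formula.repl k s φ) (Formula.repl k s ψ)
  | or φ ψ => or (Formula.repl k s φ) (Formula.repl k s ψ)
  | imp φ ψ => imp (Formula.repl k s φ) (Formula.repl k s ψ)
  | all φ => all (Formula.repl (k + 1) (s.lift 0) φ)
  | ex φ => ex (Formula.repl (k + 1) (s.lift 0) φ)

/-- Free variables of a formula. -/
def fv : Formula → Finset ℕ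
  | falsum => ∅
  | dollar => ∅
  | eq t u => t.fv ∪ u.fv
  | and φ ψ => φ.fv ∪ ψ.fv
  | or φ ψ => φ.fv ∪ ψ.fv
  | imp φ ψ => φ.fv ∪ ψ.fv
  | all φ => (φ.fv.erase 0).image (· - 1)
  | ex φ => (φ.fv.erase 0).image (· - 1)

/-- A sentence is a formula with no free variables. -/
def sentence (φ : Formula) : Prop := φ.fv = ∅

/-- The formula is in the language of `HA` (the placeholder `$` does not occur). -/
def noDollar : Formula → Prop
  | falsum => True
  | dollar => False
  | eq _ _ => True
  | and φ ψ => φ.noDollar ∧ ψ.noDollar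
  | or φ ψ => φ.noDollar ∧ ψ.noDollar
  | imp φ ψ => φ.noDollar ∧ ψ.noDollar
  | all φ => φ.noDollar
  | ex φ => φ.noDollar

/-- Quantifier-free formula of `HA`. -/
def isQF : Formula → Prop
  | falsum => True
  | dollar => False
  | eq _ _ => True
  | and φ ψ => φ.isQF ∧ ψ.isQF
  | or φ ψ => φ.isQF ∧ ψ.isQF
  | imp φ ψ => φ.isQF ∧ ψ.isQF
  | all _ => False
  | ex _ => False

/-- Flip `+`/`-` in an alternation path (`true` = `+`, `false` = `-`). -/
def pflip (s : List Bool) : List Bool := s.map (!·)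

/-- The set of alternation paths of a formula (Akama–Berardi–Hayashi–Kohlenbach). -/
def alt : Formula → Finset (List Bool)
  | falsum => {([] : List Bool)}
  | dollar => {([] : List Bool)}
  | eq _ _ => {([] : List Bool)}
  | and φ ψ => φ.alt ∪ ψ.alt
  | or φ ψ => φ.alt ∪ ψ.alt
  | imp φ ψ => φ.alt.image pflip ∪ ψ.alt
  | all φ => φ.alt.image (fun s => if s.head? = some false then s else false :: s)
  | ex φ => φ.alt.image (fun s => if s.head? = some true then s else true :: s)

/-- The degree of a formula: the maximal length of its alternation paths. -/
def degree (φ : Formula) : ℕ := φ.alt.sup List.length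

/-- The class `U_k` (for `k ≥ 1`: degree `k` and all maximal paths begin with `-`;
`U_0` is the class of degree-`0` formulas). -/
def inU (k : ℕ) (φ : Formula) : Prop :=
  φ.degree = k ∧ ∀ s ∈ φ.alt, s.length = k → k = 0 ∨ s.head? = some false

/-- The class `E_k` (for `k ≥ 1`: degree `k` and all maximal paths begin with `+`;
`E_0` is the class of degree-`0` formulas). -/
def inE (k : ℕ) (φ : Formula) : Prop :=
  φ.degree = k ∧ ∀ s ∈ φ.alt, s.length = k → k = 0 ∨ s.head? = some true

/-- The dual of a prenex formula: swap quantifiers and negate the matrix. -/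
def dual : Formula → Formula
  | all φ => ex φ.dual
  | ex φ => all φ.dual
  | φ => φ.neg

/-- The `$`-translation (Ishihara's generalized negative translation). -/
def dollarTr : Formula → Formula
  | falsum => dollar
  | dollar => dollar
  | eq t u => (eq t u).negD.negD
  | and φ ψ => and φ.dollarTr ψ.dollarTr
  | or φ ψ => (or φ.dollarTr ψ.dollarTr).negD.negD
  | imp φ ψ => imp φ.dollarTr ψ.dollarTr
  | all φ => all φ.dollarTr
  | ex φ => (ex φ.dollarTr).negD.negD

/-- The Friedman A-translation: replace every prime formula `P` (including `⊥`)
by `P ∨ *` (here `*` is the placeholder `dollar`). -/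
def aTr : Formula → Formula
  | falsum => or falsum dollar
  | dollar => dollar
  | eq t u => or (eq t u) dollar
  | and φ ψ => and φ.aTr ψ.aTr
  | or φ ψ => or φ.aTr ψ.aTr
  | imp φ ψ => imp φ.aTr ψ.aTr
  | all φ => all φ.aTr
  | ex φ => ex φ.aTr

/-- Prefix `n` universal quantifiers. -/
def allN : Formula → ℕ → Formula
  | φ, 0 => φ
  | φ, n + 1 => Formula.allN φ.all n

/-- The universal closure of a formula. -/
def univClosure (φ : Formula) : Formula := φ.allN (φ.fv.sup Nat.succ)

end Formula

mutual
  /-- The class `Σ_k` of prenex formulas. -/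
  inductive IsSigma : ℕ → Formula → Prop
    | qf {φ : Formula} : φ.isQF → IsSigma 0 φ
    | ofPi {k : ℕ} {φ : Formula} : IsPi k φ → IsSigma (k + 1) φ
    | ex {k : ℕ} {φ : Formula} : IsSigma (k + 1) φ → IsSigma (k + 1) φ.ex
  /-- The class `Π_k` of prenex formulas. -/
  inductive IsPi : ℕ → Formula → Prop
    | qf {φ : Formula} : φ.isQF → IsPi 0 φ
    | ofSigma {k : ℕ} {φ : Formula} : IsSigma k φ → IsPi (k + 1) φ
    | all {k : ℕ} {φ : Formula} : IsPi (k + 1) φ → IsPi (k + 1) φ.all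
end

/-- Axioms of Heyting arithmetic `HA` (Hilbert style intuitionistic predicate logic
with equality, plus arithmetical axioms and the induction scheme). -/
inductive HAAx : Formula → Prop
  | axK (φ ψ : Formula) : HAAx (φ.imp (ψ.imp φ))
  | axS (φ ψ χ : Formula) : HAAx ((φ.imp (ψ.imp χ)).imp ((φ.imp ψ).imp (φ.imp χ)))
  | andI (φ ψ : Formula) : HAAx (φ.imp (ψ.imp (φ.and ψ)))
  | andE1 (φ ψ : Formula) : HAAx ((φ.and ψ).imp φ)
  | andE2 (φ ψ : Formula) : HAAx ((φ.and ψ).imp ψ)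
  | orI1 (φ ψ : Formula) : HAAx (φ.imp (φ.or ψ))
  | orI2 (φ ψ : Formula) : HAAx (ψ.imp (φ.or ψ))
  | orE (φ ψ χ : Formula) : HAAx ((φ.imp χ).imp ((ψ.imp χ).imp ((φ.or ψ).imp χ)))
  | efq (φ : Formula) : HAAx (Formula.falsum.imp φ)
  | allE (φ : Formula) (t : Term) : HAAx (φ.all.imp (φ.subst 0 t))
  | exI (φ : Formula) (t : Term) : HAAx ((φ.subst 0 t).imp φ.ex)
  | allK (φ ψ : Formula) : HAAx ((φ.imp ψ).all.imp (φ.all.imp ψ.all))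
  | allVac (φ : Formula) : HAAx (φ.imp (φ.lift 0).all)
  | exE (φ ψ : Formula) : HAAx ((φ.imp (ψ.lift 0)).all.imp (φ.ex.imp ψ))
  | eqRefl (t : Term) : HAAx (Formula.eq t t)
  | eqSubst (t u : Term) (φ : Formula) : HAAx ((Formula.eq t u).imp ((φ.subst 0 t).imp (φ.subst 0 u)))
  | succNeZero (t : Term) : HAAx (Formula.neg (Formula.eq (Term.succ t) Term.zero))
  | succInj (t u : Term) : HAAx ((Formula.eq (Term.succ t) (Term.succ u)).imp (Formula.eq t u))
  | ind (φ : Formula) : HAAx ((φ.subst 0 Term.zero).imp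
      ((((φ.imp (φ.repl 0 (Term.succ (Term.var 0))))).all).imp φ.all))
  | atomDec (t u : Term) : HAAx ((Formula.eq t u).or (Formula.eq t u).neg)

/-- Provability from `HA` (in the language possibly containing `$`)
together with the extra axioms `T`. -/
inductive Proves (T : Set Formula) : Formula → Prop
  | ax {φ : Formula} : φ ∈ T → Proves T φ
  | ha {φ : Formula} : HAAx φ → Proves T φ
  | mp {φ ψ : Formula} : Proves T (φ.imp ψ) → Proves T φ → Proves T ψ
  | gen {φ : Formula} : Proves T φ → Proves T φ.all

/-- The scheme `Σ_k-LEM`. -/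
def sigLEM (k : ℕ) : Set Formula := {ψ | ∃ φ : Formula, IsSigma k φ ∧ ψ = φ.or φ.neg}

/-- The full law of excluded middle for `HA`-formulas; `Proves lemSet` is `PA`-provability. -/
def lemSet : Set Formula := {ψ | ∃ φ : Formula, φ.noDollar ∧ ψ = φ.or φ.neg}

/-- The scheme `F_k-LEM`: excluded middle for `HA`-formulas of degree at most `k`. -/
def fLEM (k : ℕ) : Set Formula :=
  {ψ | ∃ φ : Formula, φ.noDollar ∧ φ.degree ≤ k ∧ ψ = φ.or φ.neg}

/-- `T` is (the set of extra axioms of) a semi-classical arithmetic: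
`HA ⊆ HA + T ⊆ PA`, i.e. all axioms are `HA`-formulas provable in `PA`. -/
def IsSemiClassical (T : Set Formula) : Prop :=
  ∀ φ ∈ T, φ.noDollar ∧ Proves lemSet φ

mutual
  /-- The class `ℛ_{k+1}` (index `k` denotes `ℛ_{k+1}`). -/
  inductive Rcl : ℕ → Formula → Prop
    | base {k : ℕ} {φ : Formula} : φ.degree ≤ k → φ.noDollar → Rcl k φ
    | and {k : ℕ} {φ ψ : Formula} : Rcl k φ → Rcl k ψ → Rcl k (φ.and ψ)
    | or {k : ℕ} {φ ψ : Formula} : Rcl k φ → Rcl k ψ → Rcl k (φ.or ψ)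
    | all {k : ℕ} {φ : Formula} : Rcl k φ → Rcl k φ.all
    | imp {k : ℕ} {φ ψ : Formula} : Jcl k φ → Rcl k ψ → Rcl k (φ.imp ψ)
  /-- The class `𝒥_{k+1}` (index `k` denotes `𝒥_{k+1}`). -/
  inductive Jcl : ℕ → Formula → Prop
    | base {k : ℕ} {φ : Formula} : φ.degree ≤ k → φ.noDollar → Jcl k φ
    | and {k : ℕ} {φ ψ : Formula} : Jcl k φ → Jcl k ψ → Jcl k (φ.and ψ)
    | or {k : ℕ} {φ ψ : Formula} : Jcl k φ → Jcl k ψ → Jcl k (φ.or ψ)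
    | ex {k : ℕ} {φ : Formula} : Jcl k φ → Jcl k φ.ex
    | imp {k : ℕ} {φ ψ : Formula} : Rcl k φ → Jcl k ψ → Jcl k (φ.imp ψ)
end

/-- The class `𝒬_{k+1}` (index `k` denotes `𝒬_{k+1}`): generated from prime formulas by
`∧, ∨, ∀, ∃` and implications `J → Q` with `J ∈ 𝒥_{k+1}`. -/
inductive Qcl : ℕ → Formula → Prop
  | falsum {k : ℕ} : Qcl k Formula.falsum
  | eq {k : ℕ} {t u : Term} : Qcl k (Formula.eq t u)
  | and {k : ℕ} {φ ψ : Formula} : Qcl k φ → Qcl k ψ → Qcl k (φ.and ψ)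
  | or {k : ℕ} {φ ψ : Formula} : Qcl k φ → Qcl k ψ → Qcl k (φ.or ψ)
  | all {k : ℕ} {φ : Formula} : Qcl k φ → Qcl k φ.all
  | ex {k : ℕ} {φ : Formula} : Qcl k φ → Qcl k φ.ex
  | imp {k : ℕ} {φ ψ : Formula} : Jcl k φ → Qcl k ψ → Qcl k (φ.imp ψ)

/-- The class `𝒱_{k+1}` (index `k` denotes `𝒱_{k+1}`): generated from `𝒥_{k+1}` by `∧, ∀`. -/
inductive Vcl : ℕ → Formula → Prop
  | ofJ {k : ℕ} {φ : Formula} : Jcl k φ → Vcl k φ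
  | and {k : ℕ} {φ ψ : Formula} : Vcl k φ → Vcl k ψ → Vcl k (φ.and ψ)
  | all {k : ℕ} {φ : Formula} : Vcl k φ → Vcl k φ.all

/-- The class `EΠ_k`: generated from `Π_k` formulas by `∨` and `∀`. -/
inductive EPi (k : ℕ) : Formula → Prop
  | ofPi {φ : Formula} : IsPi k φ → EPi k φ
  | or {φ ψ : Formula} : EPi k φ → EPi k ψ → EPi k (φ.or ψ)
  | all {φ : Formula} : EPi k φ → EPi k φ.all

/-- The class `EΣ_{k+1}` (index `k` denotes `EΣ_{k+1}`): existential quantifications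
of `EΠ_k` formulas. -/
inductive ESig (k : ℕ) : Formula → Prop
  | ofEPi {φ : Formula} : EPi k φ → ESig k φ
  | ex {φ : Formula} : ESig k φ → ESig k φ.ex

/-- The scheme `Γ-DNEC`: universal closure of `¬¬φ` implies universal closure of `φ`. -/
def dnecSet (Γ : Set Formula) : Set Formula :=
  {ψ | ∃ φ ∈ Γ, ψ = (φ.neg.neg.univClosure).imp φ.univClosure}

/-- The scheme `Γ-DNSC`: universal closure of `¬¬φ` implies `¬¬` of the universal closure. -/
def dnscSet (Γ : Set Formula) : Set Formula :=
  {ψ | ∃ φ ∈ Γ, ψ = (φ.neg.neg.univClosure).imp φ.univClosure.neg.neg}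

/-- Double-negation elimination for sentences in `Γ`. -/
def dneSentSet (Γ : Set Formula) : Set Formula :=
  {ψ | ∃ φ ∈ Γ, φ.sentence ∧ ψ = φ.neg.neg.imp φ}



/-! ### Infrastructure: hypothetical (gen-free) provability and a deduction theorem -/

section Infra

open Formula

variable {T : Set Formula}

lemma Proves.imp_id (T : Set Formula) (φ : Formula) : Proves T (φ.imp φ) :=
  Proves.mp (Proves.mp (Proves.ha (HAAx.axS φ (φ.imp φ) φ))
    (Proves.ha (HAAx.axK φ (φ.imp φ)))) (Proves.ha (HAAx.axK φ φ))

/-- Gen-free provability with hypotheses. -/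
inductive PP (T : Set Formula) : List Formula → Formula → Prop
  | hyp {Γ φ} : φ ∈ Γ → PP T Γ φ
  | outer {Γ φ} : Proves T φ → PP T Γ φ
  | mp {Γ φ ψ} : PP T Γ (φ.imp ψ) → PP T Γ φ → PP T Γ ψ

namespace PP

lemma ha {Γ : List Formula} {φ : Formula} (h : HAAx φ) : PP T Γ φ := outer (Proves.ha h)

lemma hyp0 {Γ : List Formula} {φ : Formula} : PP T (φ :: Γ) φ := hyp (by simp)
lemma hyp1 {Γ : List Formula} {φ ψ : Formula} : PP T (ψ :: φ :: Γ) φ := hyp (by simp)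
lemma hyp2 {Γ : List Formula} {φ ψ χ : Formula} : PP T (χ :: ψ :: φ :: Γ) φ := hyp (by simp)
lemma hyp3 {Γ : List Formula} {φ ψ χ δ : Formula} : PP T (δ :: χ :: ψ :: φ :: Γ) φ := hyp (by simp)

lemma weaken {Γ Γ' : List Formula} {φ : Formula} (h : PP T Γ φ) (hs : ∀ x ∈ Γ, x ∈ Γ') :
    PP T Γ' φ := by
  induction h with
  | hyp h => exact hyp (hs _ h)
  | outer h => exact outer h
  | mp _ _ ih1 ih2 => exact mp ih1 ih2

lemma intro {Γ : List Formula} {φ ψ : Formula} (h : PP T (φ :: Γ) ψ) : PP T Γ (φ.imp ψ) := by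
  induction h with
  | hyp h =>
    rcases List.mem_cons.1 h with h | h
    · subst h; exact outer (Proves.imp_id T _)
    · exact mp (ha (HAAx.axK _ _)) (hyp h)
  | outer h => exact mp (ha (HAAx.axK _ _)) (outer h)
  | mp _ _ ih1 ih2 => exact mp (mp (ha (HAAx.axS _ _ _)) ih1) ih2

lemma toProves {φ : Formula} (h : PP T [] φ) : Proves T φ := by
  induction h with
  | hyp h => simp at h
  | outer h => exact h
  | mp _ _ ih1 ih2 => exact Proves.mp ih1 ih2

lemma and_intro {Γ : List Formula} {φ ψ : Formula} (h1 : PP T Γ φ) (h2 : PP T Γ ψ) :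
    PP T Γ (φ.and ψ) := mp (mp (ha (HAAx.andI φ ψ)) h1) h2

lemma and_left {Γ : List Formula} {φ ψ : Formula} (h : PP T Γ (φ.and ψ)) : PP T Γ φ :=
  mp (ha (HAAx.andE1 φ ψ)) h

lemma and_right {Γ : List Formula} {φ ψ : Formula} (h : PP T Γ (φ.and ψ)) : PP T Γ ψ :=
  mp (ha (HAAx.andE2 φ ψ)) h

lemma or_inl {Γ : List Formula} {φ ψ : Formula} (h : PP T Γ φ) : PP T Γ (φ.or ψ) :=
  mp (ha (HAAx.orI1 φ ψ)) h

lemma or_inr {Γ : List Formula} {φ ψ : Formula} (h : PP T Γ ψ) : PP T Γ (φ.or ψ) :=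
  mp (ha (HAAx.orI2 φ ψ)) h

lemma or_elim {Γ : List Formula} {φ ψ χ : Formula} (h : PP T Γ (φ.or ψ))
    (h1 : PP T Γ (φ.imp χ)) (h2 : PP T Γ (ψ.imp χ)) : PP T Γ χ :=
  mp (mp (mp (ha (HAAx.orE φ ψ χ)) h1) h2) h

lemma efq' {Γ : List Formula} {φ : Formula} (h : PP T Γ Formula.falsum) : PP T Γ φ :=
  mp (ha (HAAx.efq φ)) h

/-- From `φ` and `¬φ` derive anything. -/
lemma absurd' {Γ : List Formula} {φ ψ : Formula} (h1 : PP T Γ φ) (h2 : PP T Γ φ.neg) :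
    PP T Γ ψ := efq' (mp h2 h1)

end PP

end Infra


/-! ### de Bruijn lemmas -/

section DeBruijn

open Formula

lemma Term.lift_subst_cancel (t : Term) (k : ℕ) (s : Term) : Term.subst k s (t.lift k) = t := by
  induction t generalizing k s with
  | var n =>
    by_cases h : n < k
    · simp [Term.lift, Term.subst, h]
    · simp only [Term.lift, if_neg h, Term.subst]
      rw [if_neg (by omega), if_neg (by omega)]
      simp
  | func c a ts ih => simp only [Term.lift, Term.subst]; exact congrArg _ (funext fun i => ih i k s)

lemma Formula.lift_subst_cancel (φ : Formula) (k : ℕ) (s : Term) :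
    (φ.lift k).subst k s = φ := by
  induction φ generalizing k s with
  | falsum => rfl
  | dollar => rfl
  | eq t u => simp [Formula.lift, Formula.subst, Term.lift_subst_cancel]
  | and φ ψ ih1 ih2 => simp [Formula.lift, Formula.subst, ih1, ih2]
  | or φ ψ ih1 ih2 => simp [Formula.lift, Formula.subst, ih1, ih2]
  | imp φ ψ ih1 ih2 => simp [Formula.lift, Formula.subst, ih1, ih2]
  | all φ ih => simp [Formula.lift, Formula.subst, ih]
  | ex φ ih => simp [Formula.lift, Formula.subst, ih]

lemma Term.lift_succ_subst_var (t : Term) (k : ℕ) :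
    Term.subst k (Term.var k) (t.lift (k + 1)) = t := by
  induction t generalizing k with
  | var n =>
    by_cases h : n < k + 1
    · simp only [Term.lift, if_pos h, Term.subst]
      by_cases h2 : n < k
      · rw [if_pos h2]
      · rw [if_neg h2, if_pos (by omega)]; congr 1; omega
    · simp only [Term.lift, if_neg h, Term.subst]
      rw [if_neg (by omega), if_neg (by omega)]
      simp
  | func c a ts ih => simp only [Term.lift, Term.subst]; exact congrArg _ (funext fun i => ih i k)

lemma Term.lift_var (k d : ℕ) :
    (Term.var k).lift d = if k < d then Term.var k else Term.var (k + 1) := rfl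

lemma Formula.lift_succ_subst_var (φ : Formula) (k : ℕ) :
    (φ.lift (k + 1)).subst k (Term.var k) = φ := by
  induction φ generalizing k with
  | falsum => rfl
  | dollar => rfl
  | eq t u => simp [Formula.lift, Formula.subst, Term.lift_succ_subst_var]
  | and φ ψ ih1 ih2 => simp [Formula.lift, Formula.subst, ih1, ih2]
  | or φ ψ ih1 ih2 => simp [Formula.lift, Formula.subst, ih1, ih2]
  | imp φ ψ ih1 ih2 => simp [Formula.lift, Formula.subst, ih1, ih2]
  | all φ ih =>
    simp only [Formula.lift, Formula.subst, Term.lift_var]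
    rw [if_neg (by omega)]
    exact congrArg _ (ih (k + 1))
  | ex φ ih =>
    simp only [Formula.lift, Formula.subst, Term.lift_var]
    rw [if_neg (by omega)]
    exact congrArg _ (ih (k + 1))

lemma Term.lift_zero (d : ℕ) : Term.zero.lift d = Term.zero :=
  congrArg _ (funext fun i => i.elim0)

lemma Term.subst_zero (k : ℕ) (s : Term) : Term.subst k s Term.zero = Term.zero :=
  congrArg _ (funext fun i => i.elim0)

lemma Formula.lift_neg (φ : Formula) (d : ℕ) : φ.neg.lift d = (φ.lift d).neg := rfl

/-- Formula size (invariant under lifting). -/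
def Formula.fsize : Formula → ℕ
  | falsum => 1
  | dollar => 1
  | eq _ _ => 1
  | and φ ψ => φ.fsize + ψ.fsize + 1
  | or φ ψ => φ.fsize + ψ.fsize + 1
  | imp φ ψ => φ.fsize + ψ.fsize + 1
  | all φ => φ.fsize + 1
  | ex φ => φ.fsize + 1

lemma Formula.fsize_lift (φ : Formula) (d : ℕ) : (φ.lift d).fsize = φ.fsize := by
  induction φ generalizing d <;> simp [Formula.lift, Formula.fsize, *]

end DeBruijn

/-! ### Derived quantifier rules -/

section QuantRules

open Formula

variable {T : Set Formula} {α β γ χ : Formula}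

lemma Proves.imp_trans (h1 : Proves T (α.imp β)) (h2 : Proves T (β.imp γ)) :
    Proves T (α.imp γ) :=
  PP.toProves (.intro (.mp (.outer h2) (.mp (.outer h1) .hyp0)))

lemma Proves.contrapos (h : Proves T (α.imp β)) : Proves T (β.neg.imp α.neg) :=
  PP.toProves (.intro (.intro (.mp .hyp1 (.mp (.outer h) .hyp0))))

lemma Proves.all_mono (h : Proves T (α.imp β)) : Proves T (α.all.imp β.all) :=
  Proves.mp (Proves.ha (HAAx.allK α β)) (Proves.gen h)

lemma Proves.ex_lift : Proves T (α.imp (α.ex.lift 0)) := by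
  have h := Proves.ha (T := T) (HAAx.exI (α.lift 1) (Term.var 0))
  rwa [Formula.lift_succ_subst_var] at h

lemma Proves.all_lift_inst : Proves T ((α.all.lift 0).imp α) := by
  have h := Proves.ha (T := T) (HAAx.allE (α.lift 1) (Term.var 0))
  rwa [Formula.lift_succ_subst_var] at h

lemma Proves.exE_rule (h : Proves T (α.imp (β.lift 0))) : Proves T (α.ex.imp β) :=
  Proves.mp (Proves.ha (HAAx.exE α β)) (Proves.gen h)

lemma Proves.ex_mono (h : Proves T (α.imp β)) : Proves T (α.ex.imp β.ex) :=
  Proves.exE_rule (h.imp_trans Proves.ex_lift)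

/-- If `⊢ lift χ → β` (with a fresh variable 0) then `⊢ χ → ∀ β`. -/
lemma Proves.all_intro_vac (h : Proves T ((χ.lift 0).imp β)) : Proves T (χ.imp β.all) :=
  (Proves.ha (HAAx.allVac χ)).imp_trans ((Proves.ha (HAAx.allK _ _)).mp (Proves.gen h))

lemma Proves.not_ex_all_not : Proves T (α.ex.neg.imp α.neg.all) :=
  Proves.all_intro_vac (Proves.contrapos Proves.ex_lift)

lemma Proves.all_not_not_ex : Proves T (α.neg.all.imp α.ex.neg) :=
  Proves.ha (HAAx.exE α Formula.falsum)

lemma Proves.all_mp2 (h : Proves T ((α.imp (β.imp γ)).all)) :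
    Proves T (α.all.imp (β.all.imp γ.all)) := by
  have h2 : Proves T (α.all.imp ((β.imp γ).all)) :=
    Proves.mp (Proves.ha (HAAx.allK α (β.imp γ))) h
  exact PP.toProves (.intro (.intro
    (.mp (.mp (.ha (HAAx.allK β γ)) (.mp (.outer h2) .hyp1)) .hyp0)))

end QuantRules


/-! ### Classes: basic facts -/

section Classes

open Formula

lemma Formula.isQF_lift {φ : Formula} (h : φ.isQF) (d : ℕ) : (φ.lift d).isQF := by
  induction φ generalizing d with
  | falsum => trivial
  | dollar => exact h
  | eq t u => trivial
  | and φ ψ ih1 ih2 => exact ⟨ih1 h.1 d, ih2 h.2 d⟩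
  | or φ ψ ih1 ih2 => exact ⟨ih1 h.1 d, ih2 h.2 d⟩
  | imp φ ψ ih1 ih2 => exact ⟨ih1 h.1 d, ih2 h.2 d⟩
  | all φ ih => exact h.elim
  | ex φ ih => exact h.elim

lemma Formula.isQF_neg {φ : Formula} (h : φ.isQF) : φ.neg.isQF := ⟨h, trivial⟩

lemma Formula.qf_dual_eq_neg {φ : Formula} (h : φ.isQF) : φ.dual = φ.neg := by
  cases φ <;> first | rfl | exact h.elim

lemma qf_sigma {φ : Formula} (h : φ.isQF) : ∀ j, IsSigma j φ
  | 0 => IsSigma.qf h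
  | (j+1) => IsSigma.ofPi (match j, h with
      | 0, h => IsPi.qf h
      | (i+1), h => IsPi.ofSigma (qf_sigma h i))

lemma qf_pi {φ : Formula} (h : φ.isQF) : ∀ j, IsPi j φ
  | 0 => IsPi.qf h
  | (j+1) => IsPi.ofSigma (qf_sigma h j)

lemma sigma_zero_qf {φ : Formula} (h : IsSigma 0 φ) : φ.isQF := by cases h; assumption

lemma pi_zero_qf {φ : Formula} (h : IsPi 0 φ) : φ.isQF := by cases h; assumption

lemma sigma_inv {j : ℕ} {φ : Formula} (h : IsSigma (j + 1) φ) :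
    (∃ φ', φ = φ'.ex ∧ IsSigma (j + 1) φ') ∨ IsPi j φ := by
  cases h with
  | ofPi h => exact Or.inr h
  | ex h => exact Or.inl ⟨_, rfl, h⟩

lemma pi_inv {j : ℕ} {φ : Formula} (h : IsPi (j + 1) φ) :
    (∃ φ', φ = φ'.all ∧ IsPi (j + 1) φ') ∨ IsSigma j φ := by
  cases h with
  | ofSigma h => exact Or.inr h
  | all h => exact Or.inl ⟨_, rfl, h⟩

lemma class_succ : ∀ j n φ, φ.fsize ≤ n →
    (IsSigma j φ → IsSigma (j + 1) φ) ∧ (IsPi j φ → IsPi (j + 1) φ) := by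
  intro j
  induction j with
  | zero =>
    intro n φ _
    exact ⟨fun h => IsSigma.ofPi (qf_pi (sigma_zero_qf h) 0),
           fun h => IsPi.ofSigma (qf_sigma (pi_zero_qf h) 0)⟩
  | succ j ihj =>
    intro n
    induction n with
    | zero => intro φ hs; cases φ <;> simp [Formula.fsize] at hs
    | succ n ihn =>
      intro φ hs
      constructor
      · intro h
        rcases sigma_inv h with ⟨φ', rfl, h'⟩ | h'
        · exact IsSigma.ex ((ihn φ' (by simp [Formula.fsize] at hs ⊢; omega)).1 h')
        · exact IsSigma.ofPi ((ihj φ.fsize φ le_rfl).2 h')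
      · intro h
        rcases pi_inv h with ⟨φ', rfl, h'⟩ | h'
        · exact IsPi.all ((ihn φ' (by simp [Formula.fsize] at hs ⊢; omega)).2 h')
        · exact IsPi.ofSigma ((ihj φ.fsize φ le_rfl).1 h')

lemma sigma_succ {j : ℕ} {φ : Formula} (h : IsSigma j φ) : IsSigma (j + 1) φ :=
  (class_succ j φ.fsize φ le_rfl).1 h

lemma pi_succ {j : ℕ} {φ : Formula} (h : IsPi j φ) : IsPi (j + 1) φ :=
  (class_succ j φ.fsize φ le_rfl).2 h

lemma sigma_mono {j k : ℕ} (hjk : j ≤ k) {φ : Formula} (h : IsSigma j φ) : IsSigma k φ := by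
  induction hjk with
  | refl => exact h
  | step _ ih => exact sigma_succ ih

lemma pi_mono {j k : ℕ} (hjk : j ≤ k) {φ : Formula} (h : IsPi j φ) : IsPi k φ := by
  induction hjk with
  | refl => exact h
  | step _ ih => exact pi_succ ih

lemma class_lift : ∀ j n φ (d : ℕ), φ.fsize ≤ n →
    (IsSigma j φ → IsSigma j (φ.lift d)) ∧ (IsPi j φ → IsPi j (φ.lift d)) := by
  intro j
  induction j with
  | zero =>
    intro n φ d _
    exact ⟨fun h => IsSigma.qf (Formula.isQF_lift (sigma_zero_qf h) d),
           fun h => IsPi.qf (Formula.isQF_lift (pi_zero_qf h) d)⟩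
  | succ j ihj =>
    intro n
    induction n with
    | zero => intro φ d hs; cases φ <;> simp [Formula.fsize] at hs
    | succ n ihn =>
      intro φ d hs
      constructor
      · intro h
        rcases sigma_inv h with ⟨φ', rfl, h'⟩ | h'
        · exact IsSigma.ex ((ihn φ' (d+1) (by simp [Formula.fsize] at hs ⊢; omega)).1 h')
        · exact IsSigma.ofPi ((ihj φ.fsize φ d le_rfl).2 h')
      · intro h
        rcases pi_inv h with ⟨φ', rfl, h'⟩ | h'
        · exact IsPi.all ((ihn φ' (d+1) (by simp [Formula.fsize] at hs ⊢; omega)).2 h')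
        · exact IsPi.ofSigma ((ihj φ.fsize φ d le_rfl).1 h')

lemma sigma_lift {j : ℕ} {φ : Formula} (h : IsSigma j φ) (d : ℕ) : IsSigma j (φ.lift d) :=
  (class_lift j φ.fsize φ d le_rfl).1 h

lemma pi_lift {j : ℕ} {φ : Formula} (h : IsPi j φ) (d : ℕ) : IsPi j (φ.lift d) :=
  (class_lift j φ.fsize φ d le_rfl).2 h

lemma class_dual : ∀ j n φ, φ.fsize ≤ n →
    (IsSigma j φ → IsPi j φ.dual) ∧ (IsPi j φ → IsSigma j φ.dual) := by
  intro j
  induction j with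
  | zero =>
    intro n φ _
    refine ⟨fun h => ?_, fun h => ?_⟩
    · rw [Formula.qf_dual_eq_neg (sigma_zero_qf h)]
      exact IsPi.qf (Formula.isQF_neg (sigma_zero_qf h))
    · rw [Formula.qf_dual_eq_neg (pi_zero_qf h)]
      exact IsSigma.qf (Formula.isQF_neg (pi_zero_qf h))
  | succ j ihj =>
    intro n
    induction n with
    | zero => intro φ hs; cases φ <;> simp [Formula.fsize] at hs
    | succ n ihn =>
      intro φ hs
      constructor
      · intro h
        rcases sigma_inv h with ⟨φ', rfl, h'⟩ | h'
        · exact IsPi.all ((ihn φ' (by simp [Formula.fsize] at hs ⊢; omega)).1 h')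
        · exact IsPi.ofSigma ((ihj φ.fsize φ le_rfl).2 h')
      · intro h
        rcases pi_inv h with ⟨φ', rfl, h'⟩ | h'
        · exact IsSigma.ex ((ihn φ' (by simp [Formula.fsize] at hs ⊢; omega)).2 h')
        · exact IsSigma.ofPi ((ihj φ.fsize φ le_rfl).1 h')

lemma sigma_dual {j : ℕ} {φ : Formula} (h : IsSigma j φ) : IsPi j φ.dual :=
  (class_dual j φ.fsize φ le_rfl).1 h

lemma pi_dual {j : ℕ} {φ : Formula} (h : IsPi j φ) : IsSigma j φ.dual :=
  (class_dual j φ.fsize φ le_rfl).2 h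

end Classes

/-! ### Quantifier-free decidability in HA -/

section QFDec

open Formula

variable {T : Set Formula}

lemma qf_dec {φ : Formula} (h : φ.isQF) : Proves T (φ.or φ.neg) := by
  induction φ with
  | falsum => exact PP.toProves (.or_inr (.outer (Proves.imp_id T _)))
  | dollar => exact h.elim
  | eq t u => exact Proves.ha (HAAx.atomDec t u)
  | and φ ψ ih1 ih2 =>
    exact PP.toProves <| .or_elim (.outer (ih1 h.1))
      (.intro <| .or_elim (.outer (ih2 h.2))
        (.intro <| .or_inl (.and_intro .hyp1 .hyp0))
        (.intro <| .or_inr <| .intro <| .mp .hyp1 (.and_right .hyp0)))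
      (.intro <| .or_inr <| .intro <| .mp .hyp1 (.and_left .hyp0))
  | or φ ψ ih1 ih2 =>
    exact PP.toProves <| .or_elim (.outer (ih1 h.1))
      (.intro <| .or_inl (.or_inl .hyp0))
      (.intro <| .or_elim (.outer (ih2 h.2))
        (.intro <| .or_inl (.or_inr .hyp0))
        (.intro <| .or_inr <| .intro <| .or_elim .hyp0
          (.intro (.mp .hyp3 .hyp0)) (.intro (.mp .hyp2 .hyp0))))
  | imp φ ψ ih1 ih2 =>
    exact PP.toProves <| .or_elim (.outer (ih2 h.2))
      (.intro <| .or_inl <| .intro .hyp1)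
      (.intro <| .or_elim (.outer (ih1 h.1))
        (.intro <| .or_inr <| .intro <| .mp .hyp2 (.mp .hyp0 .hyp1))
        (.intro <| .or_inl <| .intro <| .absurd' .hyp0 .hyp1))
  | all φ ih => exact h.elim
  | ex φ ih => exact h.elim

lemma qf_dne {φ : Formula} (h : φ.isQF) : Proves T (φ.neg.neg.imp φ) :=
  PP.toProves <| .intro <| .or_elim (.outer (qf_dec h))
    (.outer (Proves.imp_id T φ)) (.intro (.absurd' .hyp0 .hyp1))

end QFDec


/-! ### Dual lemmas -/

section DualLemmas

open Formula

variable {T : Set Formula}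

lemma Formula.dual_all (φ : Formula) : φ.all.dual = φ.dual.ex := rfl
lemma Formula.dual_ex (φ : Formula) : φ.ex.dual = φ.dual.all := rfl
lemma Formula.dual_neg_eq (φ : Formula) : φ.neg.dual = φ.neg.neg := rfl

lemma dual_imp_neg : ∀ j n (φ : Formula), φ.fsize ≤ n →
    (IsSigma j φ → Proves T (φ.dual.imp φ.neg)) ∧ (IsPi j φ → Proves T (φ.dual.imp φ.neg)) := by
  intro j
  induction j with
  | zero =>
    intro n φ _
    constructor
    · intro h
      rw [Formula.qf_dual_eq_neg (sigma_zero_qf h)]; exact Proves.imp_id T _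
    · intro h
      rw [Formula.qf_dual_eq_neg (pi_zero_qf h)]; exact Proves.imp_id T _
  | succ j ihj =>
    intro n
    induction n with
    | zero => intro φ hs; cases φ <;> simp [Formula.fsize] at hs
    | succ n ihn =>
      intro φ hs
      constructor
      · intro h
        rcases sigma_inv h with ⟨φ', rfl, h'⟩ | h'
        · rw [Formula.dual_ex]
          have ih := (ihn φ' (by simp [Formula.fsize] at hs ⊢; omega)).1 h'
          exact (Proves.all_mono ih).imp_trans Proves.all_not_not_ex
        · exact (ihj φ.fsize φ le_rfl).2 h'
      · intro h
        rcases pi_inv h with ⟨φ', rfl, h'⟩ | h'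
        · rw [Formula.dual_all]
          have ih := (ihn φ' (by simp [Formula.fsize] at hs ⊢; omega)).2 h'
          have h2 : Proves T (φ'.neg.imp (((φ'.all).neg).lift 0)) :=
            Proves.contrapos Proves.all_lift_inst
          exact Proves.exE_rule (ih.imp_trans h2)
        · exact (ihj φ.fsize φ le_rfl).1 h'

lemma sigma_dual_imp_neg {j : ℕ} {φ : Formula} (h : IsSigma j φ) :
    Proves T (φ.dual.imp φ.neg) := (dual_imp_neg j φ.fsize φ le_rfl).1 h

lemma pi_dual_imp_neg {j : ℕ} {φ : Formula} (h : IsPi j φ) :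
    Proves T (φ.dual.imp φ.neg) := (dual_imp_neg j φ.fsize φ le_rfl).2 h

lemma dual_dual_imp : ∀ j n (φ : Formula), φ.fsize ≤ n →
    (IsSigma j φ → Proves T (φ.dual.dual.imp φ)) ∧ (IsPi j φ → Proves T (φ.dual.dual.imp φ)) := by
  intro j
  induction j with
  | zero =>
    intro n φ _
    constructor
    · intro h
      rw [Formula.qf_dual_eq_neg (sigma_zero_qf h), Formula.dual_neg_eq]
      exact qf_dne (sigma_zero_qf h)
    · intro h
      rw [Formula.qf_dual_eq_neg (pi_zero_qf h), Formula.dual_neg_eq]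
      exact qf_dne (pi_zero_qf h)
  | succ j ihj =>
    intro n
    induction n with
    | zero => intro φ hs; cases φ <;> simp [Formula.fsize] at hs
    | succ n ihn =>
      intro φ hs
      constructor
      · intro h
        rcases sigma_inv h with ⟨φ', rfl, h'⟩ | h'
        · rw [Formula.dual_ex, Formula.dual_all]
          exact Proves.ex_mono ((ihn φ' (by simp [Formula.fsize] at hs ⊢; omega)).1 h')
        · exact (ihj φ.fsize φ le_rfl).2 h'
      · intro h
        rcases pi_inv h with ⟨φ', rfl, h'⟩ | h'
        · rw [Formula.dual_all, Formula.dual_ex]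
          exact Proves.all_mono ((ihn φ' (by simp [Formula.fsize] at hs ⊢; omega)).2 h')
        · exact (ihj φ.fsize φ le_rfl).1 h'

lemma sigma_dual_dual_imp {j : ℕ} {φ : Formula} (h : IsSigma j φ) :
    Proves T (φ.dual.dual.imp φ) := (dual_dual_imp j φ.fsize φ le_rfl).1 h

/-- Forward direction: `Π_k-DML^⊥-R` implies `Σ_k-DNE-R`. -/
lemma dml_to_dne {k : ℕ} {T : Set Formula}
    (H : ∀ φ ψ : Formula, IsPi k φ → IsPi k ψ →
        Proves T (φ.and ψ).neg → Proves T (φ.dual.or ψ.dual))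
    {χ : Formula} (hχ : IsSigma k χ) (hnn : Proves T χ.neg.neg) : Proves T χ := by
  have hd : Proves T (χ.dual.imp χ.neg) := sigma_dual_imp_neg hχ
  have hprem : Proves T ((χ.dual.and χ.dual).neg) :=
    PP.toProves <| .intro <| .mp (.outer hnn) (.mp (.outer hd) (.and_left .hyp0))
  have hconc := H χ.dual χ.dual (sigma_dual hχ) (sigma_dual hχ) hprem
  have hdd : Proves T (χ.dual.dual.imp χ) := sigma_dual_dual_imp hχ
  exact PP.toProves <| .or_elim (.outer hconc) (.outer hdd) (.outer hdd)

end DualLemmas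


/-! ### Computation helpers -/

section ComputeHelpers

open Formula

variable {T : Set Formula}

lemma Formula.lift_and (φ ψ : Formula) (d : ℕ) :
    (φ.and ψ).lift d = (φ.lift d).and (ψ.lift d) := rfl
lemma Formula.lift_or (φ ψ : Formula) (d : ℕ) :
    (φ.or ψ).lift d = (φ.lift d).or (ψ.lift d) := rfl
lemma Formula.lift_imp (φ ψ : Formula) (d : ℕ) :
    (φ.imp ψ).lift d = (φ.lift d).imp (ψ.lift d) := rfl
lemma Formula.lift_all' (φ : Formula) (d : ℕ) : (φ.all).lift d = (φ.lift (d+1)).all := rfl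
lemma Formula.lift_ex' (φ : Formula) (d : ℕ) : (φ.ex).lift d = (φ.lift (d+1)).ex := rfl
lemma Formula.subst_and (φ ψ : Formula) (k : ℕ) (s : Term) :
    (φ.and ψ).subst k s = (φ.subst k s).and (ψ.subst k s) := rfl
lemma Formula.subst_or (φ ψ : Formula) (k : ℕ) (s : Term) :
    (φ.or ψ).subst k s = (φ.subst k s).or (ψ.subst k s) := rfl
lemma Formula.subst_imp (φ ψ : Formula) (k : ℕ) (s : Term) :
    (φ.imp ψ).subst k s = (φ.subst k s).imp (ψ.subst k s) := rfl
lemma Formula.subst_neg (φ : Formula) (k : ℕ) (s : Term) :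
    (φ.neg).subst k s = (φ.subst k s).neg := rfl
lemma Formula.subst_eq' (t u : Term) (k : ℕ) (s : Term) :
    (Formula.eq t u).subst k s = Formula.eq (Term.subst k s t) (Term.subst k s u) := rfl
lemma Term.subst_var0 (s : Term) : Term.subst 0 s (Term.var 0) = s := by
  simp [Term.subst]

lemma Proves.all_lift_elim {β : Formula} : Proves T ((β.lift 0).all.imp β) := by
  have h := Proves.ha (T := T) (HAAx.allE (β.lift 0) Term.zero)
  rwa [Formula.lift_subst_cancel] at h

end ComputeHelpers

/-! ### Pushing a quantifier-free guard through a prenex prefix -/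

section PushImp

open Formula

variable {T : Set Formula}

/-- Push the implication `γ → ·` inside the quantifier prefix. -/
def Formula.pushImp : Formula → Formula → Formula
  | γ, Formula.all δ => Formula.all (Formula.pushImp (γ.lift 0) δ)
  | γ, Formula.ex δ => Formula.ex (Formula.pushImp (γ.lift 0) δ)
  | γ, δ => γ.imp δ

lemma Formula.pushImp_all (γ δ : Formula) :
    γ.pushImp δ.all = (Formula.pushImp (γ.lift 0) δ).all := rfl
lemma Formula.pushImp_ex (γ δ : Formula) :
    γ.pushImp δ.ex = (Formula.pushImp (γ.lift 0) δ).ex := rfl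

lemma pushImp_class : ∀ j n (γ δ : Formula), δ.fsize ≤ n → γ.isQF →
    (IsSigma j δ → IsSigma j (γ.pushImp δ)) ∧ (IsPi j δ → IsPi j (γ.pushImp δ)) := by
  intro j
  induction j with
  | zero =>
    intro n γ δ _ hγ
    constructor
    · intro h
      have hq := sigma_zero_qf h
      cases δ <;> first | exact hq.elim | exact IsSigma.qf ⟨hγ, hq⟩
    · intro h
      have hq := pi_zero_qf h
      cases δ <;> first | exact hq.elim | exact IsPi.qf ⟨hγ, hq⟩
  | succ j ihj =>
    intro n
    induction n with
    | zero => intro γ δ _ hs; cases δ <;> simp [Formula.fsize] at *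
    | succ n ihn =>
      intro γ δ hs hγ
      constructor
      · intro h
        rcases sigma_inv h with ⟨δ', rfl, h'⟩ | h'
        · rw [Formula.pushImp_ex]
          exact IsSigma.ex ((ihn (γ.lift 0) δ' (by simp [Formula.fsize] at hs ⊢; omega)
            (Formula.isQF_lift hγ 0)).1 h')
        · exact IsSigma.ofPi ((ihj δ.fsize γ δ le_rfl hγ).2 h')
      · intro h
        rcases pi_inv h with ⟨δ', rfl, h'⟩ | h'
        · rw [Formula.pushImp_all]
          exact IsPi.all ((ihn (γ.lift 0) δ' (by simp [Formula.fsize] at hs ⊢; omega)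
            (Formula.isQF_lift hγ 0)).2 h')
        · exact IsPi.ofSigma ((ihj δ.fsize γ δ le_rfl hγ).1 h')

lemma pushImp_equiv : ∀ n (γ δ : Formula), δ.fsize ≤ n → γ.isQF →
    Proves T ((γ.pushImp δ).imp (γ.imp δ)) ∧ Proves T ((γ.imp δ).imp (γ.pushImp δ)) := by
  intro n
  induction n with
  | zero => intro γ δ hs _; cases δ <;> simp [Formula.fsize] at hs
  | succ n ihn =>
    intro γ δ hs hγ
    cases δ with
    | all δ' =>
      rw [Formula.pushImp_all]
      obtain ⟨ih1, ih2⟩ := ihn (γ.lift 0) δ'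
        (by simp [Formula.fsize] at hs ⊢; omega) (Formula.isQF_lift hγ 0)
      constructor
      · -- (all pushImp).imp (γ.imp (all δ'))
        refine (Proves.all_mono ih1).imp_trans ?_
        exact PP.toProves <| .intro <| .intro <|
          .mp (.mp (.ha (HAAx.allK (γ.lift 0) δ')) .hyp1)
            (.mp (.ha (HAAx.allVac γ)) .hyp0)
      · -- (γ.imp (all δ')).imp (all pushImp)
        refine Proves.imp_trans ?_ (Proves.all_mono ih2)
        refine Proves.all_intro_vac ?_
        rw [Formula.lift_imp, Formula.lift_all']
        exact PP.toProves <| .intro <| .intro <|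
          .mp (.outer Proves.all_lift_inst) (.mp .hyp1 .hyp0)
      | ex δ' =>
      rw [Formula.pushImp_ex]
      obtain ⟨ih1, ih2⟩ := ihn (γ.lift 0) δ'
        (by simp [Formula.fsize] at hs ⊢; omega) (Formula.isQF_lift hγ 0)
      constructor
      · -- (ex pushImp).imp (γ.imp (ex δ'))
        refine Proves.exE_rule ?_
        rw [Formula.lift_imp, Formula.lift_ex']
        exact PP.toProves <| .intro <| .intro <|
          .mp (.outer Proves.ex_lift) (.mp (.mp (.outer ih1) .hyp1) .hyp0)
      · -- (γ.imp (ex δ')).imp (ex pushImp)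
        have hpos : Proves T (δ'.imp ((γ.lift 0).imp δ')) := Proves.ha (HAAx.axK δ' (γ.lift 0))
        have hzero : Proves T ((γ.imp (δ'.subst 0 Term.zero)).imp
            (((γ.lift 0).imp δ').ex)) := by
          have h := Proves.ha (T := T) (HAAx.exI ((γ.lift 0).imp δ') Term.zero)
          rwa [Formula.subst_imp, Formula.lift_subst_cancel] at h
        refine PP.toProves <| .intro <| .or_elim (.outer (qf_dec hγ)) ?_ ?_
        · -- case γ
          refine .intro ?_
          have hexmono : Proves T (δ'.ex.imp ((γ.lift 0).imp δ').ex) :=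
            Proves.ex_mono hpos
          have := Proves.ex_mono (T := T) ih2
          exact .mp (.outer this) (.mp (.outer hexmono) (.mp .hyp1 .hyp0))
        · -- case ¬γ
          refine .intro ?_
          have : PP T [γ.neg, γ.imp δ'.ex] (γ.imp (δ'.subst 0 Term.zero)) :=
            .intro (.absurd' .hyp0 .hyp1)
          exact .mp (.outer (Proves.ex_mono ih2)) (.mp (.outer hzero) this)
    | falsum => exact ⟨Proves.imp_id T _, Proves.imp_id T _⟩
    | dollar => exact ⟨Proves.imp_id T _, Proves.imp_id T _⟩
    | eq t u => exact ⟨Proves.imp_id T _, Proves.imp_id T _⟩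
    | and a b => exact ⟨Proves.imp_id T _, Proves.imp_id T _⟩
    | or a b => exact ⟨Proves.imp_id T _, Proves.imp_id T _⟩
    | imp a b => exact ⟨Proves.imp_id T _, Proves.imp_id T _⟩

end PushImp


/-! ### Merging prenex formulas -/

section MergeHelpers

open Formula

variable {T : Set Formula} {α β m' : Formula}

lemma Proves.ex_and_equiv1 (hm : Proves T (m'.imp (α.and (β.lift 0)))) :
    Proves T (m'.ex.imp (α.ex.and β)) := by
  refine Proves.exE_rule ?_
  rw [Formula.lift_and]
  exact PP.toProves <| .intro <|
    .and_intro (.mp (.outer Proves.ex_lift) (.and_left (.mp (.outer hm) .hyp0)))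
      (.and_right (.mp (.outer hm) .hyp0))

lemma Proves.ex_and_equiv2 (hm : Proves T ((α.and (β.lift 0)).imp m')) :
    Proves T ((α.ex.and β).imp m'.ex) := by
  have hstep : Proves T (α.imp ((β.imp m'.ex).lift 0)) := by
    rw [Formula.lift_imp]
    exact PP.toProves <| .intro <| .intro <|
      .mp (.outer Proves.ex_lift) (.mp (.outer hm) (.and_intro .hyp1 .hyp0))
  have h2 : Proves T (α.ex.imp (β.imp m'.ex)) := Proves.exE_rule hstep
  exact PP.toProves <| .intro <| .mp (.mp (.outer h2) (.and_left .hyp0)) (.and_right .hyp0)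

lemma Proves.ex_and_equiv1r (hm : Proves T (m'.imp ((α.lift 0).and β))) :
    Proves T (m'.ex.imp (α.and β.ex)) := by
  refine Proves.exE_rule ?_
  rw [Formula.lift_and]
  exact PP.toProves <| .intro <|
    .and_intro (.and_left (.mp (.outer hm) .hyp0))
      (.mp (.outer Proves.ex_lift) (.and_right (.mp (.outer hm) .hyp0)))

lemma Proves.ex_and_equiv2r (hm : Proves T (((α.lift 0).and β).imp m')) :
    Proves T ((α.and β.ex).imp m'.ex) := by
  have hstep : Proves T (β.imp ((α.imp m'.ex).lift 0)) := by
    rw [Formula.lift_imp]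
    exact PP.toProves <| .intro <| .intro <|
      .mp (.outer Proves.ex_lift) (.mp (.outer hm) (.and_intro .hyp0 .hyp1))
  have h2 : Proves T (β.ex.imp (α.imp m'.ex)) := Proves.exE_rule hstep
  exact PP.toProves <| .intro <| .mp (.mp (.outer h2) (.and_right .hyp0)) (.and_left .hyp0)

lemma Proves.all_and_equiv1 (hm : Proves T (m'.imp (α.and (β.lift 0)))) :
    Proves T (m'.all.imp (α.all.and β)) := by
  have a := Proves.all_mono hm
  have b1 : Proves T ((α.and (β.lift 0)).all.imp α.all) :=
    Proves.all_mono (Proves.ha (HAAx.andE1 _ _))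
  have b2 : Proves T ((α.and (β.lift 0)).all.imp β) :=
    (Proves.all_mono (Proves.ha (HAAx.andE2 _ _))).imp_trans Proves.all_lift_elim
  exact PP.toProves <| .intro <|
    .and_intro (.mp (.outer (a.imp_trans b1)) .hyp0) (.mp (.outer (a.imp_trans b2)) .hyp0)

lemma Proves.all_and_equiv2 (hm : Proves T ((α.and (β.lift 0)).imp m')) :
    Proves T ((α.all.and β).imp m'.all) := by
  have dist : Proves T (α.all.imp ((β.lift 0).all.imp ((α.and (β.lift 0)).all))) :=
    Proves.all_mp2 (Proves.gen (Proves.ha (HAAx.andI α (β.lift 0))))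
  exact PP.toProves <| .intro <|
    .mp (.outer (Proves.all_mono hm))
      (.mp (.mp (.outer dist) (.and_left .hyp0))
        (.mp (.ha (HAAx.allVac β)) (.and_right .hyp0)))

lemma Proves.all_and_equiv1r (hm : Proves T (m'.imp ((α.lift 0).and β))) :
    Proves T (m'.all.imp (α.and β.all)) := by
  have a := Proves.all_mono hm
  have b1 : Proves T (((α.lift 0).and β).all.imp α) :=
    (Proves.all_mono (Proves.ha (HAAx.andE1 _ _))).imp_trans Proves.all_lift_elim
  have b2 : Proves T (((α.lift 0).and β).all.imp β.all) :=
    Proves.all_mono (Proves.ha (HAAx.andE2 _ _))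
  exact PP.toProves <| .intro <|
    .and_intro (.mp (.outer (a.imp_trans b1)) .hyp0) (.mp (.outer (a.imp_trans b2)) .hyp0)

lemma Proves.all_and_equiv2r (hm : Proves T (((α.lift 0).and β).imp m')) :
    Proves T ((α.and β.all).imp m'.all) := by
  have dist : Proves T ((α.lift 0).all.imp (β.all.imp (((α.lift 0).and β).all))) :=
    Proves.all_mp2 (Proves.gen (Proves.ha (HAAx.andI (α.lift 0) β)))
  exact PP.toProves <| .intro <|
    .mp (.outer (Proves.all_mono hm))
      (.mp (.mp (.outer dist) (.mp (.ha (HAAx.allVac α)) (.and_left .hyp0)))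
        (.and_right .hyp0))

lemma Proves.ex_or_equiv1 (hm : Proves T (m'.imp (α.or (β.lift 0)))) :
    Proves T (m'.ex.imp (α.ex.or β)) := by
  refine Proves.exE_rule ?_
  rw [Formula.lift_or]
  exact PP.toProves <| .intro <| .or_elim (.mp (.outer hm) .hyp0)
    (.intro <| .or_inl <| .mp (.outer Proves.ex_lift) .hyp0)
    (.intro <| .or_inr .hyp0)

lemma Proves.ex_or_equiv2 (hm : Proves T ((α.or (β.lift 0)).imp m')) :
    Proves T ((α.ex.or β).imp m'.ex) := by
  have c1 : Proves T (α.ex.imp m'.ex) :=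
    Proves.ex_mono ((Proves.ha (HAAx.orI1 α (β.lift 0))).imp_trans hm)
  have hz : Proves T (((α.subst 0 Term.zero).or β).imp ((α.or (β.lift 0)).ex)) := by
    have h := Proves.ha (T := T) (HAAx.exI (α.or (β.lift 0)) Term.zero)
    rwa [Formula.subst_or, Formula.lift_subst_cancel] at h
  have c2 : Proves T (β.imp m'.ex) :=
    ((Proves.ha (HAAx.orI2 (α.subst 0 Term.zero) β)).imp_trans hz).imp_trans (Proves.ex_mono hm)
  exact PP.toProves <| .intro <| .or_elim .hyp0 (.outer c1) (.outer c2)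

lemma Proves.ex_or_equiv1r (hm : Proves T (m'.imp ((α.lift 0).or β))) :
    Proves T (m'.ex.imp (α.or β.ex)) := by
  refine Proves.exE_rule ?_
  rw [Formula.lift_or]
  exact PP.toProves <| .intro <| .or_elim (.mp (.outer hm) .hyp0)
    (.intro <| .or_inl .hyp0)
    (.intro <| .or_inr <| .mp (.outer Proves.ex_lift) .hyp0)

lemma Proves.ex_or_equiv2r (hm : Proves T (((α.lift 0).or β).imp m')) :
    Proves T ((α.or β.ex).imp m'.ex) := by
  have c2 : Proves T (β.ex.imp m'.ex) :=
    Proves.ex_mono ((Proves.ha (HAAx.orI2 (α.lift 0) β)).imp_trans hm)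
  have hz : Proves T ((α.or (β.subst 0 Term.zero)).imp (((α.lift 0).or β).ex)) := by
    have h := Proves.ha (T := T) (HAAx.exI ((α.lift 0).or β) Term.zero)
    rwa [Formula.subst_or, Formula.lift_subst_cancel] at h
  have c1 : Proves T (α.imp m'.ex) :=
    ((Proves.ha (HAAx.orI1 α (β.subst 0 Term.zero))).imp_trans hz).imp_trans (Proves.ex_mono hm)
  exact PP.toProves <| .intro <| .or_elim .hyp0 (.outer c1) (.outer c2)

end MergeHelpers

section AndMerge

open Formula

/-- Intuitionistically faithful prenex merging of conjunctions. -/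
lemma and_merge : ∀ j : ℕ,
    (∀ α β, IsSigma j α → IsSigma j β → ∃ m, IsSigma j m ∧
      ∀ T : Set Formula, Proves T (m.imp (α.and β)) ∧ Proves T ((α.and β).imp m)) ∧
    (∀ α β, IsPi j α → IsPi j β → ∃ m, IsPi j m ∧
      ∀ T : Set Formula, Proves T (m.imp (α.and β)) ∧ Proves T ((α.and β).imp m)) := by
  intro j
  induction j with
  | zero =>
    constructor
    · intro α β hα hβ
      exact ⟨α.and β, IsSigma.qf ⟨sigma_zero_qf hα, sigma_zero_qf hβ⟩,
        fun T => ⟨Proves.imp_id T _, Proves.imp_id T _⟩⟩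
    · intro α β hα hβ
      exact ⟨α.and β, IsPi.qf ⟨pi_zero_qf hα, pi_zero_qf hβ⟩,
        fun T => ⟨Proves.imp_id T _, Proves.imp_id T _⟩⟩
  | succ j ihj =>
    have main : ∀ n α β, α.fsize + β.fsize ≤ n →
        ((IsSigma (j+1) α → IsSigma (j+1) β → ∃ m, IsSigma (j+1) m ∧
          ∀ T : Set Formula, Proves T (m.imp (α.and β)) ∧ Proves T ((α.and β).imp m)) ∧
         (IsPi (j+1) α → IsPi (j+1) β → ∃ m, IsPi (j+1) m ∧
          ∀ T : Set Formula, Proves T (m.imp (α.and β)) ∧ Proves T ((α.and β).imp m))) := by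
      intro n
      induction n with
      | zero => intro α β hs; cases α <;> simp [Formula.fsize] at hs
      | succ n ihn =>
        intro α β hs
        constructor
        · intro hα hβ
          rcases sigma_inv hα with ⟨α', rfl, hα'⟩ | hα'
          · obtain ⟨m', hm'cls, hm'⟩ := (ihn α' (β.lift 0)
              (by simp [Formula.fsize, Formula.fsize_lift] at hs ⊢; omega)).1 hα' (sigma_lift hβ 0)
            exact ⟨m'.ex, IsSigma.ex hm'cls,
              fun T => ⟨Proves.ex_and_equiv1 (hm' T).1, Proves.ex_and_equiv2 (hm' T).2⟩⟩
          · rcases sigma_inv hβ with ⟨β', rfl, hβ'⟩ | hβ'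
            · obtain ⟨m', hm'cls, hm'⟩ := (ihn (α.lift 0) β'
                (by simp [Formula.fsize, Formula.fsize_lift] at hs ⊢; omega)).1
                (sigma_lift (IsSigma.ofPi hα') 0) hβ'
              exact ⟨m'.ex, IsSigma.ex hm'cls,
                fun T => ⟨Proves.ex_and_equiv1r (hm' T).1, Proves.ex_and_equiv2r (hm' T).2⟩⟩
            · obtain ⟨m, hmcls, hm⟩ := ihj.2 α β hα' hβ'
              exact ⟨m, IsSigma.ofPi hmcls, hm⟩
        · intro hα hβ
          rcases pi_inv hα with ⟨α', rfl, hα'⟩ | hα'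
          · obtain ⟨m', hm'cls, hm'⟩ := (ihn α' (β.lift 0)
              (by simp [Formula.fsize, Formula.fsize_lift] at hs ⊢; omega)).2 hα' (pi_lift hβ 0)
            exact ⟨m'.all, IsPi.all hm'cls,
              fun T => ⟨Proves.all_and_equiv1 (hm' T).1, Proves.all_and_equiv2 (hm' T).2⟩⟩
          · rcases pi_inv hβ with ⟨β', rfl, hβ'⟩ | hβ'
            · obtain ⟨m', hm'cls, hm'⟩ := (ihn (α.lift 0) β'
                (by simp [Formula.fsize, Formula.fsize_lift] at hs ⊢; omega)).2
                (pi_lift (IsPi.ofSigma hα') 0) hβ'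
              exact ⟨m'.all, IsPi.all hm'cls,
                fun T => ⟨Proves.all_and_equiv1r (hm' T).1, Proves.all_and_equiv2r (hm' T).2⟩⟩
            · obtain ⟨m, hmcls, hm⟩ := ihj.1 α β hα' hβ'
              exact ⟨m, IsPi.ofSigma hmcls, hm⟩
    exact ⟨fun α β hα hβ => (main (α.fsize + β.fsize) α β le_rfl).1 hα hβ,
           fun α β hα hβ => (main (α.fsize + β.fsize) α β le_rfl).2 hα hβ⟩

end AndMerge


section OrMerge

open Formula

/-- Prenex merging of disjunctions of `Σ_{j+1}` formulas (with a numeric tag at the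
universal blocks), intuitionistically implying the disjunction. -/
lemma or_merge (j : ℕ) : ∀ n α β, α.fsize + β.fsize ≤ n → IsSigma (j+1) α → IsSigma (j+1) β →
    ∃ m, IsSigma (j+1) m ∧
      ∀ T : Set Formula, Proves T (m.imp (α.or β)) ∧ Proves T ((α.or β).imp m) := by
  intro n
  induction n with
  | zero => intro α β hs; cases α <;> simp [Formula.fsize] at hs
  | succ n ihn =>
    intro α β hs hα hβ
    rcases sigma_inv hα with ⟨α', rfl, hα'⟩ | hα'
    · obtain ⟨m', hm'cls, hm'⟩ := ihn α' (β.lift 0)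
        (by simp [Formula.fsize, Formula.fsize_lift] at hs ⊢; omega) hα' (sigma_lift hβ 0)
      exact ⟨m'.ex, IsSigma.ex hm'cls,
        fun T => ⟨Proves.ex_or_equiv1 (hm' T).1, Proves.ex_or_equiv2 (hm' T).2⟩⟩
    · rcases sigma_inv hβ with ⟨β', rfl, hβ'⟩ | hβ'
      · obtain ⟨m', hm'cls, hm'⟩ := ihn (α.lift 0) β'
          (by simp [Formula.fsize, Formula.fsize_lift] at hs ⊢; omega)
          (sigma_lift (IsSigma.ofPi hα') 0) hβ'
        exact ⟨m'.ex, IsSigma.ex hm'cls,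
          fun T => ⟨Proves.ex_or_equiv1r (hm' T).1, Proves.ex_or_equiv2r (hm' T).2⟩⟩
      · -- both in Π j : use the tagged merge
        set g0 : Formula := Formula.eq (Term.var 0) Term.zero with hg0
        have hg0qf : g0.isQF := trivial
        have hg1qf : g0.neg.isQF := Formula.isQF_neg hg0qf
        set P0 : Formula := g0.pushImp (α.lift 0) with hP0
        set P1 : Formula := g0.neg.pushImp (β.lift 0) with hP1
        have hP0cls : IsPi j P0 :=
          (pushImp_class j (α.lift 0).fsize g0 (α.lift 0) le_rfl hg0qf).2 (pi_lift hα' 0)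
        have hP1cls : IsPi j P1 :=
          (pushImp_class j (β.lift 0).fsize g0.neg (β.lift 0) le_rfl hg1qf).2 (pi_lift hβ' 0)
        obtain ⟨m₀, hm₀cls, hm₀⟩ := (and_merge j).2 P0 P1 hP0cls hP1cls
        refine ⟨m₀.ex, IsSigma.ex (IsSigma.ofPi hm₀cls), fun T => ?_⟩
        obtain ⟨hmp0a, hmp0b⟩ := pushImp_equiv (T := T) (α.lift 0).fsize g0 (α.lift 0)
          le_rfl hg0qf
        obtain ⟨hmp1a, hmp1b⟩ := pushImp_equiv (T := T) (β.lift 0).fsize g0.neg (β.lift 0)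
          le_rfl hg1qf
        obtain ⟨hm₀a, hm₀b⟩ := hm₀ T
        constructor
        · -- m₀.ex → α ∨ β
          refine Proves.exE_rule ?_
          rw [Formula.lift_or]
          refine PP.toProves <| .intro <|
            .or_elim (.outer (Proves.ha (HAAx.atomDec (Term.var 0) Term.zero))) ?_ ?_
          · exact .intro <| .or_inl <|
              .mp (.mp (.outer hmp0a) (.and_left (.mp (.outer hm₀a) .hyp1))) .hyp0
          · exact .intro <| .or_inr <|
              .mp (.mp (.outer hmp1a) (.and_right (.mp (.outer hm₀a) .hyp1))) .hyp0
        · -- α ∨ β → m₀.ex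
          have hchain : Proves T (((g0.imp (α.lift 0)).and (g0.neg.imp (β.lift 0))).ex.imp
              m₀.ex) := by
            refine Proves.ex_mono ?_
            exact PP.toProves <| .intro <| .mp (.outer hm₀b)
              (.and_intro (.mp (.outer hmp0b) (.and_left .hyp0))
                (.mp (.outer hmp1b) (.and_right .hyp0)))
          have hsub0 : Proves T ((((Formula.eq Term.zero Term.zero).imp α).and
              (((Formula.eq Term.zero Term.zero).neg).imp β)).imp
              (((g0.imp (α.lift 0)).and (g0.neg.imp (β.lift 0))).ex)) := by
            have h := Proves.ha (T := T)
              (HAAx.exI ((g0.imp (α.lift 0)).and (g0.neg.imp (β.lift 0))) Term.zero)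
            rw [hg0] at h ⊢
            simp only [Formula.subst_and, Formula.subst_imp, Formula.subst_neg,
              Formula.subst_eq', Term.subst_var0, Term.subst_zero,
              Formula.lift_subst_cancel] at h
            exact h
          have hsub1 : Proves T ((((Formula.eq (Term.succ Term.zero) Term.zero).imp α).and
              (((Formula.eq (Term.succ Term.zero) Term.zero).neg).imp β)).imp
              (((g0.imp (α.lift 0)).and (g0.neg.imp (β.lift 0))).ex)) := by
            have h := Proves.ha (T := T)
              (HAAx.exI ((g0.imp (α.lift 0)).and (g0.neg.imp (β.lift 0)))
                (Term.succ Term.zero))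
            rw [hg0] at h ⊢
            simp only [Formula.subst_and, Formula.subst_imp, Formula.subst_neg,
              Formula.subst_eq', Term.subst_var0, Term.subst_zero,
              Formula.lift_subst_cancel] at h
            exact h
          have ca : Proves T (α.imp m₀.ex) := by
            refine Proves.imp_trans (Proves.imp_trans ?_ hsub0) hchain
            exact PP.toProves <| .intro <| .and_intro (.intro .hyp1)
              (.intro (.absurd' (.outer (Proves.ha (HAAx.eqRefl Term.zero))) .hyp0))
          have cb : Proves T (β.imp m₀.ex) := by
            refine Proves.imp_trans (Proves.imp_trans ?_ hsub1) hchain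
            exact PP.toProves <| .intro <| .and_intro
              (.intro (.absurd' .hyp0 (.outer (Proves.ha (HAAx.succNeZero Term.zero)))))
              (.intro .hyp1)
          exact PP.toProves <| .intro <| .or_elim .hyp0 (.outer ca) (.outer cb)

end OrMerge


section Main

open Formula

variable {T : Set Formula} {k : ℕ}

/-- Under closure of `T` under `Σ_k-DNE-R`, `T` proves `φ ∨ φ^⊥` for
all prenex `φ` of level `< k`. -/
lemma lem_classes (H : ∀ χ : Formula, IsSigma k χ → Proves T χ.neg.neg → Proves T χ) :
    ∀ j, j + 1 ≤ k → ∀ n φ, φ.fsize ≤ n →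
      (IsSigma j φ → Proves T (φ.or φ.dual)) ∧ (IsPi j φ → Proves T (φ.or φ.dual)) := by
  intro j
  induction j with
  | zero =>
    intro _ n φ _
    constructor
    · intro h; rw [Formula.qf_dual_eq_neg (sigma_zero_qf h)]; exact qf_dec (sigma_zero_qf h)
    · intro h; rw [Formula.qf_dual_eq_neg (pi_zero_qf h)]; exact qf_dec (pi_zero_qf h)
  | succ j ihj =>
    intro hjk n
    induction n with
    | zero => intro φ hs; cases φ <;> simp [Formula.fsize] at hs
    | succ n ihn =>
      intro φ hs
      constructor
      · intro h
        rcases sigma_inv h with ⟨φ', rfl, h'⟩ | h'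
        · have ih : Proves T (φ'.or φ'.dual) :=
            (ihn φ' (by simp [Formula.fsize] at hs ⊢; omega)).1 h'
          have h1 : Proves T (φ'.neg.imp φ'.dual) :=
            PP.toProves <| .intro <| .or_elim (.outer ih)
              (.intro (.absurd' .hyp0 .hyp1)) (.intro .hyp0)
          have h2 : Proves T (φ'.ex.neg.imp φ'.ex.dual) := by
            rw [Formula.dual_ex]
            exact Proves.not_ex_all_not.imp_trans (Proves.all_mono h1)
          have hnn : Proves T ((φ'.ex.or φ'.ex.dual).neg.neg) :=
            PP.toProves <| .intro <|
              .mp .hyp0 (.or_inr (.mp (.outer h2) (.intro (.mp .hyp1 (.or_inl .hyp0)))))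
          obtain ⟨m, hmcls, hmeq⟩ := or_merge (j+1) _ (φ'.ex) (φ'.ex.dual) le_rfl
            (sigma_succ h) (IsSigma.ofPi (sigma_dual h))
          obtain ⟨hma, hmb⟩ := hmeq T
          have hmnn : Proves T m.neg.neg := PP.toProves <| .intro <|
            .mp (.outer hnn) (.intro (.mp .hyp1 (.mp (.outer hmb) .hyp0)))
          exact Proves.mp hma (H m (sigma_mono hjk hmcls) hmnn)
        · exact (ihj (by omega) φ.fsize φ le_rfl).2 h'
      · intro h
        rcases pi_inv h with ⟨φ', rfl, h'⟩ | h'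
        · have ih : Proves T (φ'.or φ'.dual) :=
            (ihn φ' (by simp [Formula.fsize] at hs ⊢; omega)).2 h'
          have h1 : Proves T (φ'.dual.neg.imp φ') :=
            PP.toProves <| .intro <| .or_elim (.outer ih)
              (.intro .hyp0) (.intro (.absurd' .hyp0 .hyp1))
          have h2 : Proves T (φ'.all.dual.neg.imp φ'.all) := by
            rw [Formula.dual_all]
            exact Proves.not_ex_all_not.imp_trans (Proves.all_mono h1)
          have hnn : Proves T ((φ'.all.or φ'.all.dual).neg.neg) :=
            PP.toProves <| .intro <|
              .mp .hyp0 (.or_inl (.mp (.outer h2) (.intro (.mp .hyp1 (.or_inr .hyp0)))))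
          obtain ⟨m, hmcls, hmeq⟩ := or_merge (j+1) _ (φ'.all) (φ'.all.dual) le_rfl
            (IsSigma.ofPi h) (sigma_succ (pi_dual h))
          obtain ⟨hma, hmb⟩ := hmeq T
          have hmnn : Proves T m.neg.neg := PP.toProves <| .intro <|
            .mp (.outer hnn) (.intro (.mp .hyp1 (.mp (.outer hmb) .hyp0)))
          exact Proves.mp hma (H m (sigma_mono hjk hmcls) hmnn)
        · exact (ihj (by omega) φ.fsize φ le_rfl).1 h'

/-- Under closure of `T` under `Σ_{k'+1}-DNE-R`, `T` proves `¬φ^⊥ → φ` for `φ ∈ Π_{k'+1}`. -/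
lemma pi_dual_neg_imp {k' : ℕ}
    (H : ∀ χ : Formula, IsSigma (k' + 1) χ → Proves T χ.neg.neg → Proves T χ) :
    ∀ n φ, φ.fsize ≤ n → IsPi (k' + 1) φ → Proves T (φ.dual.neg.imp φ) := by
  intro n
  induction n with
  | zero => intro φ hs _; cases φ <;> simp [Formula.fsize] at hs
  | succ n ihn =>
    intro φ hs h
    rcases pi_inv h with ⟨φ', rfl, h'⟩ | h'
    · have h1 := ihn φ' (by simp [Formula.fsize] at hs ⊢; omega) h'
      rw [Formula.dual_all]
      exact Proves.not_ex_all_not.imp_trans (Proves.all_mono h1)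
    · have hlem := (lem_classes H k' le_rfl φ.fsize φ le_rfl).1 h'
      exact PP.toProves <| .intro <| .or_elim (.outer hlem)
        (.intro .hyp0) (.intro (.absurd' .hyp0 .hyp1))

end Main

/-- `T` is closed under `Π_k-DML^⊥-R` iff `T` is closed under
`Σ_k-DNE-R`. -/
theorem dml_dual_iff_dne (k : ℕ) (T : Set Formula) :
    (∀ φ ψ : Formula, IsPi k φ → IsPi k ψ →
        Proves T (φ.and ψ).neg → Proves T (φ.dual.or ψ.dual)) ↔
    (∀ φ : Formula, IsSigma k φ → Proves T φ.neg.neg → Proves T φ) := by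
  constructor
  · intro H χ hχ hnn
    exact dml_to_dne H hχ hnn
  · intro H φ ψ hφ hψ hprem
    cases k with
    | zero =>
      have hφq := pi_zero_qf hφ
      have hψq := pi_zero_qf hψ
      have hnn : Proves T ((φ.neg.or ψ.neg).neg.neg) :=
        PP.toProves <| .intro <| .mp (.outer hprem) (.and_intro
          (.mp (.outer (qf_dne hφq)) (.intro (.mp .hyp1 (.or_inl .hyp0))))
          (.mp (.outer (qf_dne hψq)) (.intro (.mp .hyp1 (.or_inr .hyp0)))))
      have hsig : IsSigma 0 (φ.neg.or ψ.neg) :=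
        IsSigma.qf ⟨Formula.isQF_neg hφq, Formula.isQF_neg hψq⟩
      have hconc := H _ hsig hnn
      rw [Formula.qf_dual_eq_neg hφq, Formula.qf_dual_eq_neg hψq]
      exact hconc
    | succ k' =>
      have hd1 := pi_dual_neg_imp H φ.fsize φ le_rfl hφ
      have hd2 := pi_dual_neg_imp H ψ.fsize ψ le_rfl hψ
      have hnn : Proves T ((φ.dual.or ψ.dual).neg.neg) :=
        PP.toProves <| .intro <| .mp (.outer hprem) (.and_intro
          (.mp (.outer hd1) (.intro (.mp .hyp1 (.or_inl .hyp0))))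
          (.mp (.outer hd2) (.intro (.mp .hyp1 (.or_inr .hyp0)))))
      obtain ⟨m, hmcls, hmeq⟩ := or_merge k' _ φ.dual ψ.dual le_rfl (pi_dual hφ) (pi_dual hψ)
      obtain ⟨hma, hmb⟩ := hmeq T
      have hmnn : Proves T m.neg.neg := PP.toProves <| .intro <|
        .mp (.outer hnn) (.intro (.mp .hyp1 (.mp (.outer hmb) .hyp0)))
      exact Proves.mp hma (H m hmcls hmnn)

end SemiClassicalArith
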